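/- Universal property of piecewise syndetic sets: if F ⊆ P(ℕ) is a partition regular family consisting only of finite sets, then every multiplicatively piecewise syndetic set A ⊆ ℕ contains a multiplicative shift m·F of some element F ∈ F (i.e., there exist F ∈ F and m ∈ ℕ with {m·f : f ∈ F} ⊆ A). -/
import Mathlib


def MulThick (T : Set ℕ) : Prop :=
  ∀ F : Finset ℕ, (∀ f ∈ F, 0 < f) → ∃ x : ℕ, 0 < x ∧ ∀ f ∈ F, x * f ∈ T

def MulSyndetic (A : Set ℕ) : Prop :=
  ∃ k : ℕ, 0 < k ∧ ∀ x : ℕ, 0 < x → ∃ i : ℕ, 1 ≤ i ∧ i ≤ k ∧ x * i ∈ A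

def MulPiecewiseSyndetic (A : Set ℕ) : Prop :=
  ∃ S T : Set ℕ, MulSyndetic S ∧ MulThick T ∧ A = S ∩ T

/-- A family of subsets of `ℕ` is partition regular if every finite coloring of `ℕ`
admits a monochromatic member of the family. -/
def PartitionRegularFamily (𝓕 : Set (Set ℕ)) : Prop :=
  ∀ r : ℕ, ∀ C : ℕ → Fin r, ∃ F ∈ 𝓕, ∃ c : Fin r, ∀ n ∈ F, C n = c

-- compactness lemma
lemma compactPR (𝓕 : Set (Set ℕ)) (hfin : ∀ F ∈ 𝓕, F.Finite)
    (r : ℕ)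
    (hPR : ∀ C : ℕ → Fin r, ∃ F ∈ 𝓕, ∃ c : Fin r, ∀ n ∈ F, C n = c) :
    ∃ N : Finset ℕ, ∀ C : ℕ → Fin r, ∃ F ∈ 𝓕, F ⊆ ↑N ∧ ∃ c : Fin r, ∀ n ∈ F, C n = c := by
  by_contra hcon
  push_neg at hcon
  choose D hD using hcon
  set U : Ultrafilter (Finset ℕ) := Ultrafilter.of Filter.atTop with hU
  have hatTop : ∀ G : Finset ℕ, {N : Finset ℕ | G ⊆ N} ∈ U := by
    intro G
    exact Ultrafilter.of_le Filter.atTop (Filter.mem_atTop G)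
  have hval : ∀ n : ℕ, ∃ c : Fin r, {N : Finset ℕ | D N n = c} ∈ U := by
    intro n
    have : (⋃ c ∈ (Set.univ : Set (Fin r)), {N : Finset ℕ | D N n = c}) ∈ U := by
      have : (⋃ c ∈ (Set.univ : Set (Fin r)), {N : Finset ℕ | D N n = c}) = Set.univ := by
        ext N; simp
      rw [this]; exact Filter.univ_mem
    rcases (Ultrafilter.finite_biUnion_mem_iff Set.finite_univ).mp this with ⟨c, _, hc⟩
    exact ⟨c, hc⟩
  choose C hC using hval
  obtain ⟨F, hF, c, hmono⟩ := hPR C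
  have hFfin := hfin F hF
  have h1 : {N : Finset ℕ | ∀ n ∈ F, D N n = C n} ∈ U :=
    (Filter.eventually_all_finite hFfin).2 fun n _ => hC n
  have h2 : {N : Finset ℕ | hFfin.toFinset ⊆ N} ∈ U := hatTop _
  obtain ⟨N, hN1, hN2⟩ := Filter.nonempty_of_mem (Filter.inter_mem h1 h2)
  obtain ⟨n, hn, hne⟩ := hD N F hF (fun n hn => hN2 (hFfin.mem_toFinset.2 hn)) c
  exact hne ((hN1 n hn).trans (hmono n hn))

lemma aux_shift
    (𝓕 : Set (Set ℕ))
    (hfin : ∀ F ∈ 𝓕, F.Finite)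
    (hpos : ∀ F ∈ 𝓕, ∀ n ∈ F, 0 < n)
    (hPR : ∀ r : ℕ, ∀ C : ℕ → Fin r, ∃ F ∈ 𝓕, ∃ c : Fin r, ∀ n ∈ F, C n = c)
    (S T : Set ℕ) (k : ℕ) (hk : 0 < k)
    (hsyn : ∀ x : ℕ, 0 < x → ∃ i : ℕ, 1 ≤ i ∧ i ≤ k ∧ x * i ∈ S)
    (hthick : ∀ G : Finset ℕ, (∀ f ∈ G, 0 < f) → ∃ x : ℕ, 0 < x ∧ ∀ f ∈ G, x * f ∈ T) :
    ∃ F ∈ 𝓕, ∃ m : ℕ, 0 < m ∧ ∀ f ∈ F, m * f ∈ S ∩ T := by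
  obtain ⟨N, hN⟩ := compactPR 𝓕 hfin k (hPR k)
  set M : Finset ℕ := ((N.filter (0 < ·)) ×ˢ Finset.Icc 1 k).image fun p => p.1 * p.2 with hM
  have hMpos : ∀ f ∈ M, 0 < f := by
    intro f hf
    simp only [hM, Finset.mem_image, Finset.mem_product, Finset.mem_filter, Finset.mem_Icc] at hf
    obtain ⟨⟨a, b⟩, ⟨⟨_, ha⟩, hb1, _⟩, rfl⟩ := hf
    exact Nat.mul_pos ha hb1
  obtain ⟨x, hx, hxT⟩ := hthick M hMpos
  -- coloring
  have hcol : ∀ n : ℕ, 0 < n → ∃ i : ℕ, 1 ≤ i ∧ i ≤ k ∧ x * n * i ∈ S := fun n hn =>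
    hsyn (x * n) (Nat.mul_pos hx hn)
  classical
  set C : ℕ → Fin k := fun n =>
    if h : ∃ i : ℕ, 1 ≤ i ∧ i ≤ k ∧ x * n * i ∈ S then
      ⟨h.choose - 1, by have := h.choose_spec; omega⟩ else ⟨0, hk⟩ with hCdef
  obtain ⟨F, hF, hFN, c, hmono⟩ := hN C
  refine ⟨F, hF, x * (c.1 + 1), Nat.mul_pos hx (Nat.succ_pos _), fun f hf => ?_⟩
  have hfpos : 0 < f := hpos F hF f hf
  have hex : ∃ i : ℕ, 1 ≤ i ∧ i ≤ k ∧ x * f * i ∈ S := hcol f hfpos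
  have hCf : C f = c := hmono f hf
  have hchoose := hex.choose_spec
  have hval : hex.choose - 1 = c.1 := by
    have : C f = ⟨hex.choose - 1, by have := hex.choose_spec; omega⟩ := by
      simp only [hCdef, dif_pos hex]
    rw [this] at hCf
    exact congrArg Fin.val hCf
  have hieq : hex.choose = c.1 + 1 := by omega
  constructor
  · have : x * f * hex.choose ∈ S := hchoose.2.2
    rw [hieq] at this
    have heq : x * (c.1 + 1) * f = x * f * (c.1 + 1) := by ring
    rw [heq]; exact this
  · have hmem : f * (c.1 + 1) ∈ M := by
      simp only [hM, Finset.mem_image, Finset.mem_product, Finset.mem_filter, Finset.mem_Icc]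
      exact ⟨(f, c.1 + 1), ⟨⟨hFN hf, hfpos⟩, Nat.succ_le_succ (Nat.zero_le _), c.2⟩, rfl⟩
    have := hxT _ hmem
    have heq : x * (c.1 + 1) * f = x * (f * (c.1 + 1)) := by ring
    rw [heq]; exact this

/-- Universal property of multiplicatively piecewise syndetic sets: if `𝓕` is a
partition regular family of finite sets of positive integers, then every
multiplicatively piecewise syndetic set includes a multiplicative shift of a member of `𝓕`. -/
theorem mulPiecewiseSyndetic_contains_shift_of_partition_regular
    (𝓕 : Set (Set ℕ))
    (hfin : ∀ F ∈ 𝓕, F.Finite)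
    (hpos : ∀ F ∈ 𝓕, ∀ n ∈ F, 0 < n)
    (hPR : PartitionRegularFamily 𝓕)
    (A : Set ℕ) (hA : MulPiecewiseSyndetic A) :
    ∃ F ∈ 𝓕, ∃ m : ℕ, 0 < m ∧ ∀ f ∈ F, m * f ∈ A := by
  obtain ⟨S, T, ⟨k, hk, hsyn⟩, hthick, rfl⟩ := hA
  exact aux_shift 𝓕 hfin hpos hPR S T k hk hsyn hthick
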